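/- Let σ be a nondegenerate n-simplex in ℝⁿ with inradius γ and let v be a vertex of σ. Then the solid angle of σ at v, measured as the (n−1)-dimensional surface measure of the radial projection of σ onto the unit sphere centered at v, is bounded below by a positive constant depending only on n and the ratio diam(σ)/γ. -/

import Mathlib

open MeasureTheory RealInnerProductSpace

lemma aux_lip (m : ℕ) : LipschitzWith 1
    (fun (x : EuclideanSpace ℝ (Fin (m+1))) (j : Fin m) => x j.succ) := by
  apply LipschitzWith.of_dist_le_mul
  intro x y
  rw [NNReal.coe_one, one_mul]
  refine (dist_pi_le_iff dist_nonneg).2 fun j => ?_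
  rw [EuclideanSpace.dist_eq]
  calc dist (x j.succ) (y j.succ) = Real.sqrt (dist (x j.succ) (y j.succ) ^ 2) :=
        (Real.sqrt_sq dist_nonneg).symm
    _ ≤ _ := Real.sqrt_le_sqrt (Finset.single_le_sum
        (fun i _ => sq_nonneg (dist (x i) (y i))) (Finset.mem_univ j.succ))

lemma aux_model (m : ℕ) (s : ℝ) (hs0 : 0 ≤ s) (hs1 : s ≤ 1) :
    ENNReal.ofReal ((2 * (Real.sqrt (1 - s^2) / Real.sqrt (m+1)))^m) ≤
      μH[(m : ℝ)] {x ∈ Metric.sphere (0 : EuclideanSpace ℝ (Fin (m+1))) 1 |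
        s ≤ ⟪EuclideanSpace.single 0 1, x⟫} := by
  set r : ℝ := Real.sqrt (1 - s^2) with hr
  have hr2 : r ^ 2 = 1 - s ^ 2 := Real.sq_sqrt (by nlinarith)
  have hr0 : 0 ≤ r := Real.sqrt_nonneg _
  set c₀ : ℝ := r / Real.sqrt (m+1) with hc₀
  have hm1 : (0:ℝ) < Real.sqrt (m+1) := Real.sqrt_pos.2 (by positivity)
  have hc₀0 : 0 ≤ c₀ := by positivity
  have hsqm : (Real.sqrt ((m:ℝ)+1))^2 = (m:ℝ)+1 := Real.sq_sqrt (by positivity)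
  have hc₀sq : c₀ ^ 2 = r ^ 2 / (m+1) := by
    rw [hc₀, div_pow, hsqm]
  set cap := {x ∈ Metric.sphere (0 : EuclideanSpace ℝ (Fin (m+1))) 1 |
        s ≤ ⟪EuclideanSpace.single 0 1, x⟫} with hcap
  set f := fun (x : EuclideanSpace ℝ (Fin (m+1))) (j : Fin m) => x j.succ with hf
  have hsub : (Set.univ.pi fun _ : Fin m => Set.Icc (-c₀) c₀) ⊆ f '' cap := by
    intro y hy
    rw [Set.mem_pi] at hy
    set S : ℝ := ∑ j, y j ^ 2 with hS
    have hS0 : 0 ≤ S := Finset.sum_nonneg fun j _ => sq_nonneg _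
    have hSr : S ≤ r ^ 2 := by
      calc S ≤ ∑ _j : Fin m, c₀ ^ 2 := by
            refine Finset.sum_le_sum fun j _ => ?_
            have := hy j (Set.mem_univ j)
            rw [Set.mem_Icc] at this
            nlinarith [this.1, this.2]
        _ = m * c₀ ^ 2 := by simp [Finset.sum_const, mul_comm]
        _ ≤ r ^ 2 := by
            rw [hc₀sq]
            rw [div_eq_mul_inv]
            have h1 : (m:ℝ) * (r ^ 2 * ((m:ℝ)+1)⁻¹) = r^2 * ((m:ℝ) / ((m:ℝ)+1)) := by ring
            rw [h1]
            have h2 : (m:ℝ) / ((m:ℝ)+1) ≤ 1 := by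
              rw [div_le_one (by positivity)]; linarith
            nlinarith [sq_nonneg r]
    have hS1 : S ≤ 1 := by nlinarith
    set x : EuclideanSpace ℝ (Fin (m+1)) :=
      (WithLp.equiv 2 (∀ _ : Fin (m+1), ℝ)).symm (Fin.cons (Real.sqrt (1 - S)) y) with hx
    have hx0 : x 0 = Real.sqrt (1 - S) := by
      rw [hx, WithLp.equiv_symm_apply, PiLp.toLp_apply, Fin.cons_zero]
    have hxs : ∀ j : Fin m, x j.succ = y j := fun j => by
      rw [hx, WithLp.equiv_symm_apply, PiLp.toLp_apply, Fin.cons_succ]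
    refine ⟨x, ⟨?_, ?_⟩, ?_⟩
    · rw [mem_sphere_zero_iff_norm, EuclideanSpace.norm_eq]
      have : ∑ i, ‖x i‖ ^ 2 = (1 : ℝ) := by
        rw [Fin.sum_univ_succ, hx0]
        simp only [hxs, Real.norm_eq_abs, sq_abs]
        rw [Real.sq_sqrt (by linarith), ← hS]
        ring
      rw [this, Real.sqrt_one]
    · rw [EuclideanSpace.inner_single_left]
      simp only [map_one, one_mul, hx0]
      calc s = Real.sqrt (s ^ 2) := (Real.sqrt_sq hs0).symm
        _ ≤ Real.sqrt (1 - S) := Real.sqrt_le_sqrt (by nlinarith)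
    · funext j
      exact hxs j
  have hcard : ((Fintype.card (Fin m) : ℝ)) = (m : ℝ) := by simp
  have hvol : (volume : Measure (Fin m → ℝ)) = μH[(m : ℝ)] := by
    rw [← hausdorffMeasure_pi_real, hcard]
  calc ENNReal.ofReal ((2 * c₀)^m)
      = (ENNReal.ofReal (2 * c₀))^m := ENNReal.ofReal_pow (by positivity) m
    _ = volume (Set.univ.pi fun _ : Fin m => Set.Icc (-c₀) c₀) := by
        rw [volume_pi_pi]
        simp only [Real.volume_Icc]
        rw [Finset.prod_const, Finset.card_univ, Fintype.card_fin]
        congr 2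
        ring
    _ = μH[(m : ℝ)] (Set.univ.pi fun _ : Fin m => Set.Icc (-c₀) c₀) := by rw [hvol]
    _ ≤ μH[(m : ℝ)] (f '' cap) := measure_mono hsub
    _ ≤ 1 * μH[(m : ℝ)] cap := by
        have := (aux_lip m).hausdorffMeasure_image_le (Nat.cast_nonneg m) cap
        simpa using this
    _ = μH[(m : ℝ)] cap := one_mul _

lemma aux_refl (m : ℕ) (u : EuclideanSpace ℝ (Fin (m+1))) (hu : ‖u‖ = 1) :
    (Submodule.reflection (ℝ ∙ (u + (EuclideanSpace.single 0 1 : EuclideanSpace ℝ (Fin (m+1)))))) (EuclideanSpace.single 0 1) = u := by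
  set e₀ : EuclideanSpace ℝ (Fin (m+1)) := EuclideanSpace.single 0 1 with he₀
  have he₀n : ‖e₀‖ = 1 := by rw [he₀, EuclideanSpace.norm_single, norm_one]
  by_cases hw : u + e₀ = 0
  · have hu' : u = -e₀ := by linear_combination (norm := module) hw
    rw [Submodule.reflection_singleton_apply, hw]
    simp [hu']
  · rw [Submodule.reflection_singleton_apply]
    set t : ℝ := ⟪u, e₀⟫ with ht
    have h1 : ⟪u + e₀, e₀⟫ = t + 1 := by
      rw [inner_add_left, real_inner_self_eq_norm_sq, he₀n]; ring
    have h2 : ‖u + e₀‖ ^ 2 = 2 + 2 * t := by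
      rw [norm_add_sq_real, hu, he₀n]; ring
    have h2t : 2 + 2 * t ≠ 0 := by
      rw [← h2]
      exact pow_ne_zero 2 (norm_ne_zero_iff.2 hw)
    rw [h1]
    simp only [RCLike.ofReal_real_eq_id, id_eq]
    rw [h2]
    match_scalars <;> field_simp [show (1:ℝ) + t ≠ 0 by contrapose! h2t; linarith] <;> ring

lemma aux_inv (m : ℕ) (s d : ℝ) (hd : 0 ≤ d) (u : EuclideanSpace ℝ (Fin (m+1))) (hu : ‖u‖ = 1) :
    μH[d] {x ∈ Metric.sphere (0 : EuclideanSpace ℝ (Fin (m+1))) 1 |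
        s ≤ ⟪EuclideanSpace.single 0 1, x⟫} ≤
      μH[d] {x ∈ Metric.sphere (0 : EuclideanSpace ℝ (Fin (m+1))) 1 | s ≤ ⟪u, x⟫} := by
  set e₀ : EuclideanSpace ℝ (Fin (m+1)) := EuclideanSpace.single 0 1 with he₀
  set R := Submodule.reflection (ℝ ∙ (u + e₀)) with hR
  have hRe₀ : R e₀ = u := aux_refl m u hu
  have himg : R '' {x ∈ Metric.sphere (0 : EuclideanSpace ℝ (Fin (m+1))) 1 | s ≤ ⟪e₀, x⟫} ⊆
      {x ∈ Metric.sphere (0 : EuclideanSpace ℝ (Fin (m+1))) 1 | s ≤ ⟪u, x⟫} := by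
    rintro z ⟨x, ⟨hx1, hx2⟩, rfl⟩
    refine ⟨?_, ?_⟩
    · rw [mem_sphere_zero_iff_norm] at hx1 ⊢
      rw [R.norm_map, hx1]
    · rw [← hRe₀, R.inner_map_map]
      exact hx2
  calc μH[d] {x ∈ Metric.sphere (0 : EuclideanSpace ℝ (Fin (m+1))) 1 | s ≤ ⟪e₀, x⟫}
      = μH[d] (R '' {x ∈ Metric.sphere (0 : EuclideanSpace ℝ (Fin (m+1))) 1 | s ≤ ⟪e₀, x⟫}) :=
        (R.isometry.hausdorffMeasure_image (Or.inl hd) _).symm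
    _ ≤ _ := measure_mono himg

set_option maxHeartbeats 1000000 in
/-- the solid angle of a nondegenerate n-simplex at any of its vertices,
measured as the (n−1)-dimensional Hausdorff measure of the radial projection of the simplex
onto the unit sphere centered at the vertex, is bounded below by a positive constant
depending only on n and the shape-regularity ratio diam(σ)/γ. -/
theorem stmt_1 (n : ℕ) (hn : 1 ≤ n) (ρ : ℝ) (hρ : 0 < ρ) :
    ∃ ε : ℝ, 0 < ε ∧
      ∀ v : Fin (n + 1) → EuclideanSpace ℝ (Fin n), AffineIndependent ℝ v →
      ∀ γ : ℝ, 0 < γ →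
      (∃ x, Metric.closedBall x γ ⊆ convexHull ℝ (Set.range v)) →
      Metric.diam (convexHull ℝ (Set.range v)) ≤ ρ * γ →
      ∀ i : Fin (n + 1),
        ENNReal.ofReal ε ≤
          μH[(n : ℝ) - 1] {x ∈ Metric.sphere (0 : EuclideanSpace ℝ (Fin n)) 1 |
            ∃ t : ℝ, 0 < t ∧ v i + t • x ∈ convexHull ℝ (Set.range v)} := by
  obtain ⟨m, rfl⟩ : ∃ m, n = m + 1 := ⟨n - 1, by omega⟩
  have hρ2pos : (0:ℝ) < 1/ρ^2 := by positivity
  set s₁ : ℝ := Real.sqrt (max (1 - 1/ρ^2) (1/2)) with hs₁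
  have hmax0 : (0:ℝ) ≤ max (1 - 1/ρ^2) (1/2) := le_trans (by norm_num) (le_max_right _ _)
  have hmax1 : max (1 - 1/ρ^2) (1/2) < 1 := max_lt (by linarith) (by norm_num)
  have hs₁sq : s₁^2 = max (1 - 1/ρ^2) (1/2) := Real.sq_sqrt hmax0
  have hs₁0 : 0 ≤ s₁ := Real.sqrt_nonneg _
  have hs₁1 : s₁ ≤ 1 := by nlinarith
  have hs₁pos : 0 < s₁ :=
    Real.sqrt_pos.2 (lt_of_lt_of_le (by norm_num) (le_max_right _ _))
  set ε : ℝ := (2 * (Real.sqrt (1 - s₁^2) / Real.sqrt (m+1)))^m with hε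
  have h1s : 0 < 1 - s₁^2 := by nlinarith
  refine ⟨ε, ?_, ?_⟩
  · have h2 : 0 < Real.sqrt (1 - s₁^2) := Real.sqrt_pos.2 h1s
    have h3 : (0:ℝ) < Real.sqrt (m+1) := Real.sqrt_pos.2 (by positivity)
    positivity
  intro v _hv γ hγ hball' hdiam i
  obtain ⟨c, hball⟩ := hball'
  rw [show ((m+1 : ℕ) : ℝ) - 1 = (m:ℝ) by push_cast; ring]
  have hcmem : c ∈ convexHull ℝ (Set.range v) := hball (Metric.mem_closedBall_self hγ.le)
  have hvmem : v i ∈ convexHull ℝ (Set.range v) :=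
    subset_convexHull ℝ _ (Set.mem_range_self i)
  have hbd : Bornology.IsBounded (convexHull ℝ (Set.range v)) :=
    isBounded_convexHull.2 (Set.finite_range v).isBounded
  have hdist : ‖c - v i‖ ≤ ρ * γ := by
    rw [← dist_eq_norm]
    exact le_trans (Metric.dist_le_diam_of_mem hbd hcmem hvmem) hdiam
  obtain ⟨u, hu, hcap⟩ : ∃ u : EuclideanSpace ℝ (Fin (m+1)), ‖u‖ = 1 ∧
      {x ∈ Metric.sphere (0 : EuclideanSpace ℝ (Fin (m+1))) 1 | s₁ ≤ ⟪u, x⟫} ⊆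
      {x ∈ Metric.sphere (0 : EuclideanSpace ℝ (Fin (m+1))) 1 |
        ∃ t : ℝ, 0 < t ∧ v i + t • x ∈ convexHull ℝ (Set.range v)} := by
    by_cases h0 : c - v i = 0
    · refine ⟨EuclideanSpace.single 0 1, by rw [EuclideanSpace.norm_single, norm_one], ?_⟩
      rintro x ⟨hx1, -⟩
      refine ⟨hx1, γ, hγ, hball ?_⟩
      have hc : c = v i := sub_eq_zero.mp h0
      rw [Metric.mem_closedBall, dist_eq_norm, hc, add_sub_cancel_left, norm_smul,
        Real.norm_eq_abs, abs_of_pos hγ]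
      rw [mem_sphere_zero_iff_norm] at hx1
      rw [hx1, mul_one]
    · set d : ℝ := ‖c - v i‖ with hd
      have hd0 : 0 < d := by
        rw [hd]; exact norm_pos_iff.2 h0
      refine ⟨d⁻¹ • (c - v i), ?_, ?_⟩
      · rw [norm_smul, Real.norm_eq_abs, abs_of_pos (inv_pos.2 hd0), ← hd,
          inv_mul_cancel₀ hd0.ne']
      rintro x ⟨hx1, hx2⟩
      rw [mem_sphere_zero_iff_norm] at hx1
      set p : ℝ := ⟪d⁻¹ • (c - v i), x⟫ with hp
      have hpd : ⟪c - v i, x⟫ = d * p := by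
        rw [hp, real_inner_smul_left]
        field_simp
      have hun : ‖d⁻¹ • (c - v i)‖ = 1 := by
        rw [norm_smul, Real.norm_eq_abs, abs_of_pos (inv_pos.2 hd0), ← hd,
          inv_mul_cancel₀ hd0.ne']
      have hp1 : p ≤ 1 := by
        have h := real_inner_le_norm (d⁻¹ • (c - v i)) x
        rw [hun, hx1, one_mul] at h
        exact h
      have hppos : 0 < p := lt_of_lt_of_le hs₁pos hx2
      refine ⟨mem_sphere_zero_iff_norm.2 hx1, d * p, mul_pos hd0 hppos, hball ?_⟩
      rw [Metric.mem_closedBall, dist_eq_norm]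
      have h1 : v i + (d*p) • x - c = (d*p) • x - (c - v i) := by module
      have key : ‖v i + (d*p) • x - c‖^2 = d^2 * (1 - p^2) := by
        rw [h1, norm_sub_sq_real, norm_smul, Real.norm_eq_abs,
          abs_of_pos (mul_pos hd0 hppos), hx1, mul_one, real_inner_smul_left,
          real_inner_comm, hpd, ← hd]
        ring
      have hd2 : d^2 ≤ ρ^2 * γ^2 := by nlinarith [hd0.le]
      have hps2 : s₁^2 ≤ p^2 := by nlinarith [hx2]
      have hbound : d^2 * (1 - p^2) ≤ γ^2 := by
        rcases le_total (1 - 1/ρ^2) (1/2) with hcase | hcase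
        · have hsq : s₁^2 = 1/2 := by rw [hs₁sq, max_eq_right hcase]
          have h' : (1:ℝ)/2 ≤ 1/ρ^2 := by linarith
          have hρ2 : ρ^2 ≤ 2 := by
            rw [div_le_div_iff₀ (by norm_num) (by positivity)] at h'
            linarith
          have hB : 1 - p^2 ≤ 1/2 := by linarith
          have hC : d^2 ≤ 2*γ^2 :=
            hd2.trans (mul_le_mul_of_nonneg_right hρ2 (sq_nonneg γ))
          calc d^2 * (1 - p^2) ≤ d^2 * (1/2) :=
                mul_le_mul_of_nonneg_left hB (sq_nonneg d)
            _ ≤ (2*γ^2) * (1/2) := mul_le_mul_of_nonneg_right hC (by norm_num)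
            _ = γ^2 := by ring
        · have hsq : s₁^2 = 1 - 1/ρ^2 := by rw [hs₁sq, max_eq_left hcase]
          have hq0 : (0:ℝ) ≤ 1/ρ^2 := hρ2pos.le
          have hA : 1 - p^2 ≤ 1/ρ^2 := by linarith
          calc d^2 * (1 - p^2) ≤ d^2 * (1/ρ^2) :=
                mul_le_mul_of_nonneg_left hA (sq_nonneg d)
            _ ≤ (ρ^2 * γ^2) * (1/ρ^2) := mul_le_mul_of_nonneg_right hd2 hq0
            _ = γ^2 := by field_simp
      have hfin : ‖v i + (d*p) • x - c‖^2 ≤ γ^2 := by rw [key]; exact hbound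
      calc ‖v i + (d*p) • x - c‖ = Real.sqrt (‖v i + (d*p) • x - c‖^2) :=
            (Real.sqrt_sq (norm_nonneg _)).symm
        _ ≤ Real.sqrt (γ^2) := Real.sqrt_le_sqrt hfin
        _ = γ := Real.sqrt_sq hγ.le
  calc ENNReal.ofReal ε
      ≤ μH[(m : ℝ)] {x ∈ Metric.sphere (0 : EuclideanSpace ℝ (Fin (m+1))) 1 |
          s₁ ≤ ⟪EuclideanSpace.single 0 1, x⟫} := aux_model m s₁ hs₁0 hs₁1
    _ ≤ μH[(m : ℝ)] {x ∈ Metric.sphere (0 : EuclideanSpace ℝ (Fin (m+1))) 1 |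
          s₁ ≤ ⟪u, x⟫} := aux_inv m s₁ (m:ℝ) (Nat.cast_nonneg m) u hu
    _ ≤ _ := measure_mono hcap
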